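/- arXiv:1302.6584 — 5 statements merged into one kernel-verified Lean document; each statement's English description precedes it below -/
import Mathlib

section
/- Let θ : X → ℝ be a function on a finite product space X = X_A × X_B, and define Q(x_B) = log Σ_{x_A} exp(θ(x_A, x_B)). Then for every probability distribution τ on X, max_{x_B} Q(x_B) ≥ E_τ[θ(x)] + H_{A|B}(τ), where H_{A|B}(τ) = −Σ_x τ(x) log τ(x_A|x_B) is the conditional entropy. -/
open Real Finset

lemma key_ineq (t c : ℝ) (ht : 0 ≤ t) (hc : 0 < c) :
    t * (Real.log c - Real.log t) ≤ c - t := by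
  rcases eq_or_lt_of_le ht with h | h
  · simp [← h]; linarith
  · have hlog : Real.log (c / t) ≤ c / t - 1 :=
      Real.log_le_sub_one_of_pos (div_pos hc h)
    rw [Real.log_div hc.ne' h.ne'] at hlog
    have h1 := mul_le_mul_of_nonneg_left hlog ht
    have h2 : t * (c / t - 1) = c - t := by field_simp
    linarith

/-- Per-slice Gibbs inequality. -/
lemma slice_ineq {XA : Type*} [Fintype XA] (u w : XA → ℝ) (hu : ∀ a, 0 ≤ u a)
    (hT : 0 < ∑ a, Real.exp (w a)) :
    (∑ a, (u a * w a - u a * Real.log (u a))) + (∑ a, u a) * Real.log (∑ a, u a)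
      ≤ (∑ a, u a) * Real.log (∑ a, Real.exp (w a)) := by
  set T : ℝ := ∑ a, Real.exp (w a) with hTdef
  set s : ℝ := ∑ a, u a with hsdef
  have hs0 : 0 ≤ s := Finset.sum_nonneg fun a _ => hu a
  rcases eq_or_lt_of_le hs0 with hs | hs
  · have hz : ∀ a ∈ Finset.univ, u a = 0 := by
      intro a _
      have := (Finset.sum_eq_zero_iff_of_nonneg (fun a _ => hu a)).mp hs.symm
      exact this a (Finset.mem_univ a)
    have : ∀ a, u a = 0 := fun a => hz a (Finset.mem_univ a)
    simp [this, ← hs]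
  · -- s > 0
    have hterm : ∀ a ∈ Finset.univ,
        u a * (Real.log s + w a - Real.log T - Real.log (u a))
          ≤ s * Real.exp (w a) / T - u a := by
      intro a _
      have hc : 0 < s * Real.exp (w a) / T :=
        div_pos (mul_pos hs (Real.exp_pos _)) hT
      have := key_ineq (u a) _ (hu a) hc
      have hlogc : Real.log (s * Real.exp (w a) / T)
          = Real.log s + w a - Real.log T := by
        rw [Real.log_div (mul_pos hs (Real.exp_pos _)).ne' hT.ne',
          Real.log_mul hs.ne' (Real.exp_pos _).ne', Real.log_exp]
      rw [hlogc] at this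
      linarith
    have hsum := Finset.sum_le_sum hterm
    have hR : ∑ a, (s * Real.exp (w a) / T - u a) = 0 := by
      rw [Finset.sum_sub_distrib, ← hsdef]
      have : ∑ a, s * Real.exp (w a) / T = s * T / T := by
        rw [← Finset.sum_div, ← Finset.mul_sum, ← hTdef]
      rw [this, mul_div_cancel_right₀ _ hT.ne']
      ring
    have hL : ∑ a, u a * (Real.log s + w a - Real.log T - Real.log (u a))
        = s * Real.log s + (∑ a, (u a * w a - u a * Real.log (u a))) - s * Real.log T := by
      simp only [mul_sub, mul_add, Finset.sum_sub_distrib, Finset.sum_add_distrib,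
        ← Finset.sum_mul, ← hsdef]
      ring
    rw [hR, hL] at hsum
    linarith

/-- For any distribution τ on X_A × X_B,  max_{x_B} Q(x_B) ≥ E_τ[θ] + H_{A|B}(τ). -/
theorem maxQ_ge_free_energy
    {XA XB : Type*} [Fintype XA] [Fintype XB] [Nonempty XA] [Nonempty XB]
    (θ : XA × XB → ℝ) (τ : XA × XB → ℝ)
    (hτ0 : ∀ x, 0 ≤ τ x) (hτ1 : ∑ x, τ x = 1) :
    let Q : XB → ℝ := fun b => Real.log (∑ a, Real.exp (θ (a, b)))
    let H : ℝ := -∑ x, τ x * Real.log (τ x)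
    let HB : ℝ := -∑ b, (∑ a, τ (a, b)) * Real.log (∑ a, τ (a, b))
    Finset.univ.sup' Finset.univ_nonempty Q ≥ (∑ x, τ x * θ x) + (H - HB) := by
  intro Q H HB
  set M : ℝ := Finset.univ.sup' Finset.univ_nonempty Q with hM
  set p : XB → ℝ := fun b => ∑ a, τ (a, b) with hp
  have hp0 : ∀ b, 0 ≤ p b := fun b => Finset.sum_nonneg fun a _ => hτ0 _
  have hp1 : ∑ b, p b = 1 := by
    rw [← hτ1, ← Fintype.sum_prod_type_right]
  have hT : ∀ b : XB, 0 < ∑ a, Real.exp (θ (a, b)) := fun b =>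
    Finset.sum_pos (fun a _ => Real.exp_pos _) Finset.univ_nonempty
  -- rewrite LHS of the free energy as a sum over b
  have step1 : (∑ x, τ x * θ x) + (H - HB)
      = ∑ b, ((∑ a, (τ (a, b) * θ (a, b) - τ (a, b) * Real.log (τ (a, b))))
          + p b * Real.log (p b)) := by
    simp only [H, HB, Fintype.sum_prod_type_right, hp,
      Finset.sum_add_distrib, Finset.sum_sub_distrib]
    ring
  have step2 : ∀ b ∈ Finset.univ,
      ((∑ a, (τ (a, b) * θ (a, b) - τ (a, b) * Real.log (τ (a, b))))
        + p b * Real.log (p b)) ≤ p b * Q b := by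
    intro b _
    exact slice_ineq (fun a => τ (a, b)) (fun a => θ (a, b)) (fun a => hτ0 _) (hT b)
  have step3 : ∑ b, p b * Q b ≤ M := by
    calc ∑ b, p b * Q b ≤ ∑ b, p b * M :=
          Finset.sum_le_sum fun b _ =>
            mul_le_mul_of_nonneg_left (Finset.le_sup' Q (Finset.mem_univ b)) (hp0 b)
      _ = M := by rw [← Finset.sum_mul, hp1, one_mul]
  rw [ge_iff_le, step1]
  exact le_trans (Finset.sum_le_sum step2) step3
end

section
/- Let θ : X → ℝ on a finite product space X = X_A × X_B and Q(x_B) = log Σ_{x_A} exp(θ(x_A, x_B)). Then max_{x_B} Q(x_B) = max over probability distributions τ on X of { E_τ[θ] + H_{A|B}(τ) }, and the maximum is attained by the distribution τ*(x_A, x_B) = 1[x_B = x_B*] · p(x_A | x_B), where x_B* maximizes Q and p(x_A|x_B) = exp(θ(x_A,x_B) − Q(x_B)). -/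
open Real Finset

variable {XA XB : Type*} [Fintype XA] [Fintype XB] [DecidableEq XB]

/-- Q(x_B) = log Σ_{x_A} exp θ(x_A, x_B). -/
noncomputable def Qfun (θ : XA × XB → ℝ) (b : XB) : ℝ :=
  Real.log (∑ a, Real.exp (θ (a, b)))

/-- Conditional entropy H_{A|B}(τ) = H(τ) − H_B(τ), with the 0 log 0 = 0 convention. -/
noncomputable def HAB (τ : XA × XB → ℝ) : ℝ :=
  (-∑ x, τ x * Real.log (τ x)) -
    (-∑ b, (∑ a, τ (a, b)) * Real.log (∑ a, τ (a, b)))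

/-- τ is a probability mass function. -/
def IsPMF {X : Type*} [Fintype X] (τ : X → ℝ) : Prop :=
  (∀ x, 0 ≤ τ x) ∧ ∑ x, τ x = 1

lemma klaux (t p : ℝ) (ht : 0 ≤ t) (hp : 0 < p) :
    t * Real.log p - t * Real.log t ≤ p - t := by
  rcases eq_or_lt_of_le ht with h | h
  · simp [← h]; positivity
  · have h1 : Real.log (p / t) ≤ p / t - 1 :=
      Real.log_le_sub_one_of_pos (div_pos hp h)
    rw [Real.log_div hp.ne' h.ne'] at h1
    have := mul_le_mul_of_nonneg_left h1 ht
    rw [mul_sub, mul_sub, mul_div_cancel₀ _ h.ne', mul_one] at this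
    linarith

/-- Dual representation of marginal MAP:  max_{x_B} Q(x_B) equals the maximum of
E_τ[θ] + H_{A|B}(τ) over all distributions τ, attained by
τ*(x_A,x_B) = 1[x_B = x_B*] exp(θ(x_A,x_B) − Q(x_B)). -/
theorem marginal_MAP_duality [Nonempty XA] [Nonempty XB] (θ : XA × XB → ℝ)
    (xBs : XB) (hmax : ∀ b, Qfun θ b ≤ Qfun θ xBs) :
    let τs : XA × XB → ℝ := fun x =>
      if x.2 = xBs then Real.exp (θ x - Qfun θ x.2) else 0
    IsPMF τs ∧
    (∑ x, τs x * θ x) + HAB τs = Qfun θ xBs ∧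
    (∀ τ : XA × XB → ℝ, IsPMF τ → (∑ x, τ x * θ x) + HAB τ ≤ Qfun θ xBs) := by
  intro τs
  set S : XB → ℝ := fun b => ∑ a, Real.exp (θ (a, b)) with hSdef
  have hS : ∀ b, 0 < S b := fun b =>
    Finset.sum_pos (fun a _ => Real.exp_pos _) Finset.univ_nonempty
  have hQ : ∀ b, Qfun θ b = Real.log (S b) := fun b => rfl
  have hexpQ : ∀ b, Real.exp (Qfun θ b) = S b := fun b => Real.exp_log (hS b)
  -- sum of τs over a column
  have hcol : ∀ b : XB, ∑ a, Real.exp (θ (a, b) - Qfun θ b) = 1 := by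
    intro b
    simp only [Real.exp_sub, hexpQ]
    rw [← Finset.sum_div]
    exact div_self (hS b).ne'
  have hmarg : ∀ b : XB, (∑ a, τs (a, b)) = if b = xBs then 1 else 0 := by
    intro b
    by_cases hb : b = xBs
    · simp only [τs, hb, if_true]
      exact hcol xBs
    · simp [τs, hb]
  -- sum over product grouped by b
  have hgroup : ∀ f : XA × XB → ℝ, ∑ x, f x = ∑ b, ∑ a, f (a, b) := by
    intro f
    rw [Fintype.sum_prod_type]
    exact Finset.sum_comm
  have hsum1 : ∑ x, τs x = 1 := by
    rw [hgroup]
    simp only [hmarg]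
    simp
  have hPMF : IsPMF τs := by
    refine ⟨fun x => ?_, hsum1⟩
    simp only [τs]
    split
    · exact (Real.exp_pos _).le
    · exact le_refl 0
  refine ⟨hPMF, ?_, ?_⟩
  · -- equality for τs
    have hE : ∀ f : XA × XB → ℝ,
        ∑ x, τs x * f x = ∑ a, Real.exp (θ (a, xBs) - Qfun θ xBs) * f (a, xBs) := by
      intro f
      rw [hgroup fun x => τs x * f x]
      have : ∀ b, (∑ a, τs (a, b) * f (a, b)) =
          if b = xBs then ∑ a, Real.exp (θ (a, xBs) - Qfun θ xBs) * f (a, xBs) else 0 := by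
        intro b
        by_cases hb : b = xBs
        · subst hb; simp [τs]
        · simp [τs, hb]
      simp only [this]
      simp
    have hlogτs : ∀ a, Real.log (τs (a, xBs)) = θ (a, xBs) - Qfun θ xBs := by
      intro a; simp [τs]
    have hHB : (∑ b, (∑ a, τs (a, b)) * Real.log (∑ a, τs (a, b))) = 0 := by
      apply Finset.sum_eq_zero
      intro b _
      rw [hmarg b]
      by_cases hb : b = xBs <;> simp [hb]
    have hH : (∑ x, τs x * Real.log (τs x)) =
        ∑ a, Real.exp (θ (a, xBs) - Qfun θ xBs) * (θ (a, xBs) - Qfun θ xBs) := by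
      have := hE fun x => Real.log (τs x)
      rw [this]
      exact Finset.sum_congr rfl fun a _ => by rw [hlogτs]
    rw [HAB, hHB, hE θ, hH]
    have : ∑ a, Real.exp (θ (a, xBs) - Qfun θ xBs) * θ (a, xBs)
        - ∑ a, Real.exp (θ (a, xBs) - Qfun θ xBs) * (θ (a, xBs) - Qfun θ xBs)
        = Qfun θ xBs * ∑ a, Real.exp (θ (a, xBs) - Qfun θ xBs) := by
      rw [← Finset.sum_sub_distrib, Finset.mul_sum]
      exact Finset.sum_congr rfl fun a _ => by ring
    rw [hcol xBs] at this
    linarith [this]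
  · -- inequality for general τ
    rintro τ ⟨hpos, hsum⟩
    set m : XB → ℝ := fun b => ∑ a, τ (a, b) with hmdef
    have hm0 : ∀ b, 0 ≤ m b := fun b => Finset.sum_nonneg fun a _ => hpos _
    have hmsum : ∑ b, m b = 1 := by rw [hmdef, ← hgroup τ, hsum]
    -- per-b inequality
    have key : ∀ b, (∑ a, (τ (a, b) * θ (a, b) - τ (a, b) * Real.log (τ (a, b))))
        + m b * Real.log (m b) ≤ m b * Qfun θ b := by
      intro b
      rcases eq_or_lt_of_le (hm0 b) with h0 | h0
      · have hz : ∀ a, τ (a, b) = 0 := by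
          intro a
          have := Finset.sum_eq_zero_iff_of_nonneg (fun a _ => hpos (a, b)) |>.mp h0.symm
          exact this a (Finset.mem_univ a)
        simp [hz, ← h0]
      · -- m b > 0
        have h1 : ∑ a, (τ (a, b) * Real.log (m b * Real.exp (θ (a, b)) / S b)
              - τ (a, b) * Real.log (τ (a, b)))
            ≤ ∑ a, (m b * Real.exp (θ (a, b)) / S b - τ (a, b)) := by
          apply Finset.sum_le_sum
          intro a _
          exact klaux _ _ (hpos _)
            (div_pos (mul_pos h0 (Real.exp_pos _)) (hS b))
        have hrhs : ∑ a, (m b * Real.exp (θ (a, b)) / S b - τ (a, b)) = 0 := by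
          rw [Finset.sum_sub_distrib]
          have : ∑ a, m b * Real.exp (θ (a, b)) / S b
              = m b * (∑ a, Real.exp (θ (a, b))) / S b := by
            rw [Finset.mul_sum, Finset.sum_div]
          rw [this, mul_div_assoc, div_self (hS b).ne', mul_one]
          simp [hmdef]
        have hlogp : ∀ a, Real.log (m b * Real.exp (θ (a, b)) / S b)
            = Real.log (m b) + θ (a, b) - Qfun θ b := by
          intro a
          rw [Real.log_div (by positivity) (hS b).ne',
            Real.log_mul h0.ne' (Real.exp_pos _).ne', Real.log_exp, hQ]
        have hlhs : ∑ a, (τ (a, b) * Real.log (m b * Real.exp (θ (a, b)) / S b)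
              - τ (a, b) * Real.log (τ (a, b)))
            = (∑ a, (τ (a, b) * θ (a, b) - τ (a, b) * Real.log (τ (a, b))))
              + m b * Real.log (m b) - m b * Qfun θ b := by
          have expand : ∀ a, τ (a, b) * Real.log (m b * Real.exp (θ (a, b)) / S b)
              - τ (a, b) * Real.log (τ (a, b))
              = (τ (a, b) * θ (a, b) - τ (a, b) * Real.log (τ (a, b)))
                + τ (a, b) * Real.log (m b) - τ (a, b) * Qfun θ b := by
            intro a; rw [hlogp a]; ring
          rw [Finset.sum_congr rfl fun a _ => expand a]
          rw [Finset.sum_sub_distrib, Finset.sum_add_distrib,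
            ← Finset.sum_mul, ← Finset.sum_mul]
        rw [hlhs, hrhs] at h1
        linarith
    -- sum over b
    have hsum2 : ∑ b, ((∑ a, (τ (a, b) * θ (a, b) - τ (a, b) * Real.log (τ (a, b))))
        + m b * Real.log (m b)) ≤ ∑ b, m b * Qfun θ b :=
      Finset.sum_le_sum fun b _ => key b
    have hQb : ∑ b, m b * Qfun θ b ≤ Qfun θ xBs := by
      calc ∑ b, m b * Qfun θ b ≤ ∑ b, m b * Qfun θ xBs :=
            Finset.sum_le_sum fun b _ =>
              mul_le_mul_of_nonneg_left (hmax b) (hm0 b)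
        _ = Qfun θ xBs := by rw [← Finset.sum_mul, hmsum, one_mul]
    have hsplit : ∑ b, ((∑ a, (τ (a, b) * θ (a, b) - τ (a, b) * Real.log (τ (a, b))))
        + m b * Real.log (m b))
        = (∑ x, τ x * θ x) - (∑ x, τ x * Real.log (τ x))
          + ∑ b, m b * Real.log (m b) := by
      rw [Finset.sum_add_distrib]
      congr 1
      rw [hgroup fun x => τ x * θ x, hgroup fun x => τ x * Real.log (τ x),
        ← Finset.sum_sub_distrib]
      exact Finset.sum_congr rfl fun b _ => Finset.sum_sub_distrib _ _
    rw [hsplit] at hsum2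
    rw [HAB]
    simp only [hmdef] at hsum2
    linarith
end

section
/- If x_B* is the unique maximizer of Q(x_B) = log Σ_{x_A} exp(θ(x_A, x_B)), then the unique maximizer of τ ↦ E_τ[θ] + H_{A|B}(τ) over the probability simplex on X_A × X_B is τ*(x_A, x_B) = 1[x_B = x_B*] · exp(θ(x_A, x_B*) − Q(x_B*)). -/
open Real Finset

variable {XA XB : Type*} [Fintype XA] [Fintype XB] [DecidableEq XB]

lemma gibbs_pt_le (t m u : ℝ) (h0 : 0 ≤ t) (h1 : t ≤ m) :
    t * u - t * Real.log t + t * Real.log m ≤ m * Real.exp u - t := by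
  have hm0 : 0 ≤ m := h0.trans h1
  rcases h0.eq_or_lt with h | h
  · simp only [← h]
    have : (0:ℝ) ≤ m * Real.exp u := mul_nonneg hm0 (Real.exp_pos u).le
    simpa using this
  · have hm : 0 < m := lt_of_lt_of_le h h1
    have hx : 0 < m * Real.exp u / t := by positivity
    have hlog : Real.log (m * Real.exp u / t) = Real.log m + u - Real.log t := by
      rw [Real.log_div (by positivity) h.ne', Real.log_mul hm.ne' (Real.exp_pos u).ne',
        Real.log_exp]
    have h2 := mul_le_mul_of_nonneg_left (Real.log_le_sub_one_of_pos hx) h.le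
    rw [hlog] at h2
    have h3 : t * (m * Real.exp u / t - 1) = m * Real.exp u - t := by field_simp
    nlinarith [h2, h3]

lemma gibbs_pt_lt (t m u : ℝ) (h0 : 0 ≤ t) (h1 : t ≤ m) (hne : t ≠ m * Real.exp u) :
    t * u - t * Real.log t + t * Real.log m < m * Real.exp u - t := by
  have hm0 : 0 ≤ m := h0.trans h1
  rcases h0.eq_or_lt with h | h
  · have hne0 : m * Real.exp u ≠ 0 := fun hc => hne (by rw [← h, hc])
    have : (0:ℝ) < m * Real.exp u :=
      (mul_nonneg hm0 (Real.exp_pos u).le).lt_of_ne (Ne.symm hne0)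
    simp only [← h]
    simpa using this
  · have hm : 0 < m := lt_of_lt_of_le h h1
    have hx : 0 < m * Real.exp u / t := by positivity
    have hx1 : m * Real.exp u / t ≠ 1 := by
      rw [Ne, div_eq_one_iff_eq h.ne']
      exact fun hc => hne hc.symm
    have hlog : Real.log (m * Real.exp u / t) = Real.log m + u - Real.log t := by
      rw [Real.log_div (by positivity) h.ne', Real.log_mul hm.ne' (Real.exp_pos u).ne',
        Real.log_exp]
    have h2 := mul_lt_mul_of_pos_left (Real.log_lt_sub_one_of_pos hx hx1) h
    rw [hlog] at h2
    have h3 : t * (m * Real.exp u / t - 1) = m * Real.exp u - t := by field_simp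
    nlinarith [h2, h3]

variable {A : Type*} [Fintype A] [Nonempty A] in
lemma exp_sub_log_sum (θ : A → ℝ) :
    ∑ a, Real.exp (θ a - Real.log (∑ a, Real.exp (θ a))) = 1 := by
  have hS : 0 < ∑ a, Real.exp (θ a) :=
    Finset.sum_pos (fun a _ => Real.exp_pos _) Finset.univ_nonempty
  simp only [Real.exp_sub, Real.exp_log hS, ← Finset.sum_div]
  exact div_self hS.ne'

variable {A : Type*} [Fintype A] [Nonempty A] in
lemma gibbs_sum_le (θ : A → ℝ) (t : A → ℝ) (ht : ∀ a, 0 ≤ t a) :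
    (∑ a, (t a * θ a - t a * Real.log (t a))) + (∑ a, t a) * Real.log (∑ a, t a)
      ≤ (∑ a, t a) * Real.log (∑ a, Real.exp (θ a)) := by
  set m := ∑ a, t a with hm
  set Q := Real.log (∑ a, Real.exp (θ a)) with hQ
  have key : ∀ a ∈ Finset.univ, t a * (θ a - Q) - t a * Real.log (t a) + t a * Real.log m
      ≤ m * Real.exp (θ a - Q) - t a := fun a _ =>
    gibbs_pt_le _ _ _ (ht a) (Finset.single_le_sum (fun i _ => ht i) (Finset.mem_univ a))
  have hsum := Finset.sum_le_sum key
  have hL : ∑ a, (t a * (θ a - Q) - t a * Real.log (t a) + t a * Real.log m)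
      = (∑ a, (t a * θ a - t a * Real.log (t a))) + m * Real.log m - m * Q := by
    simp only [mul_sub]
    rw [Finset.sum_add_distrib, Finset.sum_sub_distrib, Finset.sum_sub_distrib,
      ← Finset.sum_mul, ← Finset.sum_mul, Finset.sum_sub_distrib, ← hm]
    ring
  have hR : ∑ a, (m * Real.exp (θ a - Q) - t a) = 0 := by
    rw [Finset.sum_sub_distrib, ← Finset.mul_sum, exp_sub_log_sum, ← hm]
    ring
  rw [hL, hR] at hsum
  linarith

variable {A : Type*} [Fintype A] [Nonempty A] in
lemma gibbs_sum_eq (θ : A → ℝ) (t : A → ℝ) (ht : ∀ a, 0 ≤ t a)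
    (heq : (∑ a, (t a * θ a - t a * Real.log (t a))) + (∑ a, t a) * Real.log (∑ a, t a)
      = (∑ a, t a) * Real.log (∑ a, Real.exp (θ a))) :
    ∀ a, t a = (∑ a, t a) * Real.exp (θ a - Real.log (∑ a, Real.exp (θ a))) := by
  set m := ∑ a, t a with hm
  set Q := Real.log (∑ a, Real.exp (θ a)) with hQ
  intro a
  by_contra hne
  have key : ∀ b ∈ Finset.univ, t b * (θ b - Q) - t b * Real.log (t b) + t b * Real.log m
      ≤ m * Real.exp (θ b - Q) - t b := fun b _ =>
    gibbs_pt_le _ _ _ (ht b) (Finset.single_le_sum (fun i _ => ht i) (Finset.mem_univ b))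
  have hstrict : t a * (θ a - Q) - t a * Real.log (t a) + t a * Real.log m
      < m * Real.exp (θ a - Q) - t a :=
    gibbs_pt_lt _ _ _ (ht a) (Finset.single_le_sum (fun i _ => ht i) (Finset.mem_univ a)) hne
  have hsum : ∑ b, (t b * (θ b - Q) - t b * Real.log (t b) + t b * Real.log m)
      < ∑ b, (m * Real.exp (θ b - Q) - t b) :=
    Finset.sum_lt_sum key ⟨a, Finset.mem_univ a, hstrict⟩
  have hL : ∑ b, (t b * (θ b - Q) - t b * Real.log (t b) + t b * Real.log m)
      = (∑ b, (t b * θ b - t b * Real.log (t b))) + m * Real.log m - m * Q := by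
    simp only [mul_sub]
    rw [Finset.sum_add_distrib, Finset.sum_sub_distrib, Finset.sum_sub_distrib,
      ← Finset.sum_mul, ← Finset.sum_mul, Finset.sum_sub_distrib, ← hm]
    ring
  have hR : ∑ b, (m * Real.exp (θ b - Q) - t b) = 0 := by
    rw [Finset.sum_sub_distrib, ← Finset.mul_sum, exp_sub_log_sum, ← hm]
    ring
  rw [hL, hR] at hsum
  linarith


lemma sum_prod_swap {XA XB : Type*} [Fintype XA] [Fintype XB] (f : XA × XB → ℝ) :
    ∑ x, f x = ∑ b, ∑ a, f (a, b) := by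
  rw [Fintype.sum_prod_type]
  exact Finset.sum_comm

lemma F_rearrange {XA XB : Type*} [Fintype XA] [Fintype XB]
    (θ : XA × XB → ℝ) (τ : XA × XB → ℝ) :
    (∑ x, τ x * θ x) + HAB τ
      = ∑ b, ((∑ a, (τ (a, b) * θ (a, b) - τ (a, b) * Real.log (τ (a, b))))
          + (∑ a, τ (a, b)) * Real.log (∑ a, τ (a, b))) := by
  unfold HAB
  rw [sum_prod_swap (fun x => τ x * θ x), sum_prod_swap (fun x => τ x * Real.log (τ x)),
    Finset.sum_add_distrib]
  simp only [Finset.sum_sub_distrib]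
  ring


/-- If x_B* is the unique maximizer of Q, then
τ*(x_A,x_B) = 1[x_B = x_B*] exp(θ(x_A,x_B*) − Q(x_B*)) is the unique maximizer of
τ ↦ E_τ[θ] + H_{A|B}(τ) over the probability simplex. -/
theorem marginal_MAP_unique_maximizer [Nonempty XA] [Nonempty XB] (θ : XA × XB → ℝ)
    (xBs : XB) (huniq : ∀ b, b ≠ xBs → Qfun θ b < Qfun θ xBs) :
    let τs : XA × XB → ℝ := fun x =>
      if x.2 = xBs then Real.exp (θ (x.1, xBs) - Qfun θ xBs) else 0
    IsPMF τs ∧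
    (∑ x, τs x * θ x) + HAB τs = Qfun θ xBs ∧
    (∀ τ : XA × XB → ℝ, IsPMF τ → (∑ x, τ x * θ x) + HAB τ ≤ Qfun θ xBs) ∧
    (∀ τ : XA × XB → ℝ, IsPMF τ →
      (∑ x, τ x * θ x) + HAB τ = Qfun θ xBs → τ = τs) := by
  intro τs
  have hQle : ∀ b, Qfun θ b ≤ Qfun θ xBs := fun b => by
    by_cases hb : b = xBs
    · rw [hb]
    · exact (huniq b hb).le
  have hone : ∑ a, Real.exp (θ (a, xBs) - Qfun θ xBs) = 1 :=
    exp_sub_log_sum (fun a => θ (a, xBs))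
  have hτs : ∀ a b, τs (a, b) = if b = xBs then Real.exp (θ (a, xBs) - Qfun θ xBs) else 0 :=
    fun a b => rfl
  -- PMF
  have hPMF : IsPMF τs := by
    refine ⟨fun x => ?_, ?_⟩
    · dsimp only [τs]
      split
      · positivity
      · exact le_refl 0
    · rw [sum_prod_swap τs]
      have hin : ∀ b, ∑ a, τs (a, b) = if b = xBs then 1 else 0 := by
        intro b
        by_cases hb : b = xBs
        · simp only [hτs, hb, if_pos rfl]; exact hone
        · simp [hτs, hb]
      rw [Finset.sum_congr rfl fun b _ => hin b, Finset.sum_ite_eq' Finset.univ xBs fun _ => (1:ℝ)]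
      simp
  refine ⟨hPMF, ?_, ?_, ?_⟩
  -- value at τs
  · rw [F_rearrange]
    have hterm : ∀ b, (∑ a, (τs (a, b) * θ (a, b) - τs (a, b) * Real.log (τs (a, b))))
        + (∑ a, τs (a, b)) * Real.log (∑ a, τs (a, b))
        = if b = xBs then Qfun θ xBs else 0 := by
      intro b
      by_cases hb : b = xBs
      · subst hb
        simp only [hτs, if_pos rfl, eq_self_iff_true, if_true]
        rw [hone]
        have h2 : ∀ a, Real.exp (θ (a, b) - Qfun θ b) * θ (a, b)
            - Real.exp (θ (a, b) - Qfun θ b) * Real.log (Real.exp (θ (a, b) - Qfun θ b))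
            = Real.exp (θ (a, b) - Qfun θ b) * Qfun θ b := by
          intro a; rw [Real.log_exp]; ring
        rw [Finset.sum_congr rfl fun a _ => h2 a, ← Finset.sum_mul, hone]
        simp
      · simp [hτs, hb]
    rw [Finset.sum_congr rfl fun b _ => hterm b,
      Finset.sum_ite_eq' Finset.univ xBs fun _ => Qfun θ xBs]
    simp
  -- upper bound
  · intro τ hτ
    rw [F_rearrange]
    have hg : ∀ b, (∑ a, (τ (a, b) * θ (a, b) - τ (a, b) * Real.log (τ (a, b))))
        + (∑ a, τ (a, b)) * Real.log (∑ a, τ (a, b)) ≤ (∑ a, τ (a, b)) * Qfun θ b :=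
      fun b => gibbs_sum_le (fun a => θ (a, b)) (fun a => τ (a, b)) (fun a => hτ.1 (a, b))
    have hmnn : ∀ b, 0 ≤ ∑ a, τ (a, b) :=
      fun b => Finset.sum_nonneg fun a _ => hτ.1 (a, b)
    have hmsum : ∑ b, ∑ a, τ (a, b) = 1 := by rw [← sum_prod_swap τ]; exact hτ.2
    calc ∑ b, ((∑ a, (τ (a, b) * θ (a, b) - τ (a, b) * Real.log (τ (a, b))))
          + (∑ a, τ (a, b)) * Real.log (∑ a, τ (a, b)))
        ≤ ∑ b, (∑ a, τ (a, b)) * Qfun θ b := Finset.sum_le_sum fun b _ => hg b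
      _ ≤ ∑ b, (∑ a, τ (a, b)) * Qfun θ xBs :=
          Finset.sum_le_sum fun b _ => mul_le_mul_of_nonneg_left (hQle b) (hmnn b)
      _ = Qfun θ xBs := by rw [← Finset.sum_mul, hmsum, one_mul]
  -- uniqueness
  · intro τ hτ heq
    have hg : ∀ b ∈ Finset.univ, (∑ a, (τ (a, b) * θ (a, b) - τ (a, b) * Real.log (τ (a, b))))
        + (∑ a, τ (a, b)) * Real.log (∑ a, τ (a, b)) ≤ (∑ a, τ (a, b)) * Qfun θ b :=
      fun b _ => gibbs_sum_le (fun a => θ (a, b)) (fun a => τ (a, b)) (fun a => hτ.1 (a, b))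
    have hmnn : ∀ b, 0 ≤ ∑ a, τ (a, b) :=
      fun b => Finset.sum_nonneg fun a _ => hτ.1 (a, b)
    have hmsum : ∑ b, ∑ a, τ (a, b) = 1 := by rw [← sum_prod_swap τ]; exact hτ.2
    have hmQ : ∀ b ∈ Finset.univ, (∑ a, τ (a, b)) * Qfun θ b ≤ (∑ a, τ (a, b)) * Qfun θ xBs :=
      fun b _ => mul_le_mul_of_nonneg_left (hQle b) (hmnn b)
    have htot : ∑ b, (∑ a, τ (a, b)) * Qfun θ xBs = Qfun θ xBs := by
      rw [← Finset.sum_mul, hmsum, one_mul]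
    have hA : ∑ b, ((∑ a, (τ (a, b) * θ (a, b) - τ (a, b) * Real.log (τ (a, b))))
        + (∑ a, τ (a, b)) * Real.log (∑ a, τ (a, b))) = Qfun θ xBs := by
      rw [← F_rearrange]; exact heq
    have h1 := Finset.sum_le_sum hg
    have h2 := Finset.sum_le_sum hmQ
    have hEq1 : ∑ b, ((∑ a, (τ (a, b) * θ (a, b) - τ (a, b) * Real.log (τ (a, b))))
        + (∑ a, τ (a, b)) * Real.log (∑ a, τ (a, b))) = ∑ b, (∑ a, τ (a, b)) * Qfun θ b := by
      rw [hA]; rw [htot] at h2; rw [hA] at h1; linarith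
    have hEq2 : ∑ b, (∑ a, τ (a, b)) * Qfun θ b = ∑ b, (∑ a, τ (a, b)) * Qfun θ xBs := by
      rw [htot]; rw [hA] at h1; rw [htot] at h2; linarith
    have hgibbs := (Finset.sum_eq_sum_iff_of_le hg).mp hEq1
    have hconc := (Finset.sum_eq_sum_iff_of_le hmQ).mp hEq2
    -- marginals vanish off xBs
    have hm0 : ∀ b, b ≠ xBs → ∑ a, τ (a, b) = 0 := by
      intro b hb
      by_contra hne
      have hmpos : 0 < ∑ a, τ (a, b) := (hmnn b).lt_of_ne (Ne.symm hne)
      have := hconc b (Finset.mem_univ b)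
      have := mul_left_cancel₀ hmpos.ne' this
      exact absurd this (huniq b hb).ne
    have hmxBs : ∑ a, τ (a, xBs) = 1 := by
      rw [← hmsum, Finset.sum_eq_single xBs (fun b _ hb => hm0 b hb) (fun h => absurd (Finset.mem_univ xBs) h)]
    -- conclude
    funext x
    obtain ⟨a, b⟩ := x
    have hτab := gibbs_sum_eq (fun a => θ (a, b)) (fun a => τ (a, b)) (fun a => hτ.1 (a, b))
      (hgibbs b (Finset.mem_univ b)) a
    by_cases hb : b = xBs
    · subst hb
      rw [hτs, if_pos rfl]
      rw [hτab, hmxBs, one_mul]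
      rfl
    · rw [hτs, if_neg hb, hτab, hm0 b hb, zero_mul]
end

section
/- For any ε > 0 and θ : X_A × X_B → ℝ, define Φ^ε = ε · log Σ_{x_B} exp(Q(x_B)/ε) where Q(x_B) = log Σ_{x_A} exp(θ(x_A, x_B)). Then Φ^ε = max over probability distributions τ on X_A × X_B of { E_τ[θ] + H_{A|B}(τ) + ε H_B(τ) }. -/
open Real Finset
set_option maxHeartbeats 1000000

variable {XA XB : Type*} [Fintype XA] [Fintype XB]

/-- Entropy of the X_B-marginal of τ. -/
noncomputable def HBm (τ : XA × XB → ℝ) : ℝ :=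
  -∑ b, (∑ a, τ (a, b)) * Real.log (∑ a, τ (a, b))

lemma gibbs_sum_le_s4 {X : Type*} [Fintype X] [Nonempty X] (p f : X → ℝ) (hp : ∀ x, 0 ≤ p x) :
    ∑ x, p x * f x - ∑ x, p x * Real.log (p x) ≤
      (∑ x, p x) * Real.log (∑ x, Real.exp (f x)) - (∑ x, p x) * Real.log (∑ x, p x) := by
  set Z := ∑ x, Real.exp (f x) with hZdef
  set s := ∑ x, p x with hsdef
  have hZ : 0 < Z := Finset.sum_pos (fun x _ => Real.exp_pos _) Finset.univ_nonempty
  have hs : 0 ≤ s := Finset.sum_nonneg fun x _ => hp x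
  have key : ∀ x ∈ Finset.univ, p x * f x - p x * Real.log (p x) + p x * Real.log s
      - p x * Real.log Z ≤ s * Real.exp (f x) / Z - p x := by
    intro x _
    rcases (hp x).eq_or_lt with h | h
    · rw [← h]
      have : 0 ≤ s * Real.exp (f x) / Z := by positivity
      simpa using this
    · have hps : p x ≤ s := Finset.single_le_sum (fun y _ => hp y) (Finset.mem_univ x)
      have hspos : 0 < s := lt_of_lt_of_le h hps
      have ht : 0 < s * Real.exp (f x) / (p x * Z) := by positivity
      have hlog := Real.log_le_sub_one_of_pos ht
      have hlogt : Real.log (s * Real.exp (f x) / (p x * Z)) =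
          Real.log s + f x - Real.log (p x) - Real.log Z := by
        rw [Real.log_div (by positivity) (by positivity), Real.log_mul (ne_of_gt hspos)
          (Real.exp_ne_zero _), Real.log_mul (ne_of_gt h) (ne_of_gt hZ), Real.log_exp]
        ring
      rw [hlogt] at hlog
      have h1 : p x * (Real.log s + f x - Real.log (p x) - Real.log Z)
          ≤ p x * (s * Real.exp (f x) / (p x * Z) - 1) :=
        mul_le_mul_of_nonneg_left hlog (le_of_lt h)
      have h2 : p x * (s * Real.exp (f x) / (p x * Z)) = s * Real.exp (f x) / Z := by
        field_simp
      nlinarith [h1, h2]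
  have hsum := Finset.sum_le_sum key
  have hL : ∑ x, (p x * f x - p x * Real.log (p x) + p x * Real.log s - p x * Real.log Z)
      = ∑ x, p x * f x - ∑ x, p x * Real.log (p x) + s * Real.log s - s * Real.log Z := by
    simp [Finset.sum_sub_distrib, Finset.sum_add_distrib, ← Finset.sum_mul, ← hsdef]
  have hR : ∑ x, (s * Real.exp (f x) / Z - p x) = 0 := by
    rw [Finset.sum_sub_distrib]
    have : ∑ x, s * Real.exp (f x) / Z = s := by
      rw [← Finset.sum_div, ← Finset.mul_sum, ← hZdef, mul_div_assoc, div_self (ne_of_gt hZ),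
        mul_one]
    rw [this]; ring
  rw [hL, hR] at hsum
  linarith

/-- Smoothed dual representation:
Φ^ε = ε log Σ_{x_B} exp(Q(x_B)/ε) = max_τ { E_τ[θ] + H_{A|B}(τ) + ε H_B(τ) }. -/
theorem smoothed_marginal_MAP_duality [Nonempty XA] [Nonempty XB]
    (θ : XA × XB → ℝ) (ε : ℝ) (hε : 0 < ε) :
    IsGreatest
      {v | ∃ τ : XA × XB → ℝ, IsPMF τ ∧
        v = (∑ x, τ x * θ x) + HAB τ + ε * HBm τ}
      (ε * Real.log (∑ b, Real.exp (Qfun θ b / ε))) := by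
  obtain ⟨Z, hZdef⟩ : ∃ Z : ℝ, Z = ∑ b, Real.exp (Qfun θ b / ε) := ⟨_, rfl⟩
  rw [← hZdef]
  have hZ : 0 < Z := hZdef ▸ Finset.sum_pos (fun b _ => Real.exp_pos _) Finset.univ_nonempty
  have hεne : ε ≠ 0 := ne_of_gt hε
  constructor
  · -- membership: the optimal τ₀
    obtain ⟨τ₀, hτ₀def⟩ : ∃ τ₀ : XA × XB → ℝ,
        τ₀ = fun x => Real.exp (θ x + (1/ε - 1) * Qfun θ x.2 - Real.log Z) := ⟨_, rfl⟩
    have hτ₀ : ∀ x, τ₀ x = Real.exp (θ x + (1/ε - 1) * Qfun θ x.2 - Real.log Z) := by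
      intro x; rw [hτ₀def]
    have hQ : ∀ b : XB, ∑ a, Real.exp (θ (a, b)) = Real.exp (Qfun θ b) := fun b =>
      (Real.exp_log (Finset.sum_pos (fun a _ => Real.exp_pos _) Finset.univ_nonempty)).symm
    have hm : ∀ b : XB, ∑ a, τ₀ (a, b) = Real.exp (Qfun θ b / ε - Real.log Z) := by
      intro b
      calc ∑ a, τ₀ (a, b)
          = ∑ a, Real.exp (θ (a, b)) * Real.exp ((1/ε - 1) * Qfun θ b - Real.log Z) := by
            refine Finset.sum_congr rfl fun a _ => ?_
            rw [hτ₀ (a, b), ← Real.exp_add]; congr 1; ring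
        _ = Real.exp (Qfun θ b) * Real.exp ((1/ε - 1) * Qfun θ b - Real.log Z) := by
            rw [← Finset.sum_mul, hQ b]
        _ = Real.exp (Qfun θ b / ε - Real.log Z) := by
            rw [← Real.exp_add]; congr 1; field_simp; ring
    have hmsum : ∑ b, ∑ a, τ₀ (a, b) = 1 := by
      have : ∀ b : XB, ∑ a, τ₀ (a, b) = Real.exp (Qfun θ b / ε) / Z := fun b => by
        rw [hm b, Real.exp_sub, Real.exp_log hZ]
      rw [Finset.sum_congr rfl fun b _ => this b, ← Finset.sum_div, ← hZdef,
        div_self (ne_of_gt hZ)]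
    have hτsum : ∑ x, τ₀ x = 1 := by
      rw [Fintype.sum_prod_type_right]; exact hmsum
    refine ⟨τ₀, ⟨fun x => by rw [hτ₀ x]; exact (Real.exp_pos _).le, hτsum⟩, ?_⟩
    have hlogτ : ∀ x : XA × XB, Real.log (τ₀ x)
        = θ x + (1/ε - 1) * Qfun θ x.2 - Real.log Z := fun x => by
      rw [hτ₀ x, Real.log_exp]
    have hlogm : ∀ b : XB, Real.log (∑ a, τ₀ (a, b)) = Qfun θ b / ε - Real.log Z := fun b => by
      rw [hm b, Real.log_exp]
    have hT : ∑ x, τ₀ x * Qfun θ x.2 = ∑ b, (∑ a, τ₀ (a, b)) * Qfun θ b := by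
      rw [Fintype.sum_prod_type_right]
      exact Finset.sum_congr rfl fun b _ => by simp [Finset.sum_mul]
    have hS2 : ∑ x, τ₀ x * Real.log (τ₀ x)
        = (∑ x, τ₀ x * θ x) + (1/ε - 1) * (∑ b, (∑ a, τ₀ (a, b)) * Qfun θ b) - Real.log Z := by
      calc ∑ x, τ₀ x * Real.log (τ₀ x)
          = ∑ x, (τ₀ x * θ x + (1/ε - 1) * (τ₀ x * Qfun θ x.2) - Real.log Z * τ₀ x) := by
            refine Finset.sum_congr rfl fun x _ => ?_
            rw [hlogτ x]; ring
        _ = (∑ x, τ₀ x * θ x) + (1/ε - 1) * (∑ x, τ₀ x * Qfun θ x.2)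
              - Real.log Z * (∑ x, τ₀ x) := by
            rw [Finset.sum_sub_distrib, Finset.sum_add_distrib, ← Finset.mul_sum,
              ← Finset.mul_sum]
        _ = _ := by rw [hτsum, hT]; ring
    have hS3 : ∑ b, (∑ a, τ₀ (a, b)) * Real.log (∑ a, τ₀ (a, b))
        = (1/ε) * (∑ b, (∑ a, τ₀ (a, b)) * Qfun θ b) - Real.log Z := by
      calc ∑ b, (∑ a, τ₀ (a, b)) * Real.log (∑ a, τ₀ (a, b))
          = ∑ b, ((1/ε) * ((∑ a, τ₀ (a, b)) * Qfun θ b)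
              - Real.log Z * (∑ a, τ₀ (a, b))) := by
            refine Finset.sum_congr rfl fun b _ => ?_
            rw [hlogm b]; field_simp
        _ = (1/ε) * (∑ b, (∑ a, τ₀ (a, b)) * Qfun θ b)
              - Real.log Z * (∑ b, ∑ a, τ₀ (a, b)) := by
            rw [Finset.sum_sub_distrib, ← Finset.mul_sum, ← Finset.mul_sum]
        _ = _ := by rw [hmsum]; ring
    simp only [HAB, HBm]
    rw [hS2, hS3]
    field_simp
    ring
  · -- upper bound
    rintro v ⟨τ, ⟨hpos, hsum⟩, rfl⟩
    have hm0 : ∀ b : XB, 0 ≤ ∑ a, τ (a, b) := fun b =>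
      Finset.sum_nonneg fun a _ => hpos _
    have hmsum : ∑ b, ∑ a, τ (a, b) = 1 := by
      rw [← Fintype.sum_prod_type_right]; exact hsum
    have hA : ∀ b : XB, ∑ a, τ (a, b) * θ (a, b) - ∑ a, τ (a, b) * Real.log (τ (a, b))
        ≤ (∑ a, τ (a, b)) * Qfun θ b - (∑ a, τ (a, b)) * Real.log (∑ a, τ (a, b)) := by
      intro b
      exact gibbs_sum_le_s4 (fun a => τ (a, b)) (fun a => θ (a, b)) (fun a => hpos _)
    have hA' : ∑ b, ∑ a, τ (a, b) * θ (a, b) - ∑ b, ∑ a, τ (a, b) * Real.log (τ (a, b))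
        ≤ ∑ b, (∑ a, τ (a, b)) * Qfun θ b
          - ∑ b, (∑ a, τ (a, b)) * Real.log (∑ a, τ (a, b)) := by
      have := Finset.sum_le_sum (fun b (_ : b ∈ Finset.univ) => hA b)
      simpa [Finset.sum_sub_distrib] using this
    have hB := gibbs_sum_le_s4 (fun b => ∑ a, τ (a, b)) (fun b => Qfun θ b / ε) hm0
    rw [hmsum] at hB
    simp only [one_mul, Real.log_one, sub_zero] at hB
    rw [← hZdef] at hB
    have hQε : ∑ b, (∑ a, τ (a, b)) * (Qfun θ b / ε)
        = (∑ b, (∑ a, τ (a, b)) * Qfun θ b) / ε := by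
      rw [Finset.sum_div]
      exact Finset.sum_congr rfl fun b _ => by ring
    rw [hQε] at hB
    have hB' : ∑ b, (∑ a, τ (a, b)) * Qfun θ b
        - ε * ∑ b, (∑ a, τ (a, b)) * Real.log (∑ a, τ (a, b)) ≤ ε * Real.log Z := by
      have h := mul_le_mul_of_nonneg_left hB hε.le
      have : ε * ((∑ b, (∑ a, τ (a, b)) * Qfun θ b) / ε
          - ∑ b, (∑ a, τ (a, b)) * Real.log (∑ a, τ (a, b)))
          = ∑ b, (∑ a, τ (a, b)) * Qfun θ b
            - ε * ∑ b, (∑ a, τ (a, b)) * Real.log (∑ a, τ (a, b)) := by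
        field_simp
      linarith [h, this.symm.le, this.le]
    have h1 : ∑ x, τ x * θ x = ∑ b, ∑ a, τ (a, b) * θ (a, b) :=
      Fintype.sum_prod_type_right _
    have h2 : ∑ x, τ x * Real.log (τ x) = ∑ b, ∑ a, τ (a, b) * Real.log (τ (a, b)) :=
      Fintype.sum_prod_type_right _
    simp only [HAB, HBm]
    rw [h1, h2]
    linarith [hA', hB']
end

section
/- Let θ : X_A × X_B → ℝ and let M° be the set of probability distributions τ on X_A × X_B whose X_B-marginal is a point mass, i.e., there exists x_B* with τ_B(x_B) = 1[x_B = x_B*]. Then max_{τ ∈ M°} { E_τ[θ] + H_{A|B}(τ) } = max_{x_B} log Σ_{x_A} exp(θ(x_A, x_B)); moreover, for any set N of distributions with M° ⊆ N ⊆ all distributions, the maximum over N equals the same value. -/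
open Real Finset

variable {XA XB : Type*} [Fintype XA] [Fintype XB] [DecidableEq XB]

/-- Distributions whose X_B-marginal is a point mass. -/
def Mdet : Set ((XA × XB) → ℝ) :=
  {τ | IsPMF τ ∧ ∃ xB0 : XB, ∀ b, (∑ a, τ (a, b)) = if b = xB0 then 1 else 0}

lemma Zpos [Nonempty XA] (θ : XA × XB → ℝ) (b : XB) :
    0 < ∑ a, Real.exp (θ (a, b)) :=
  Finset.sum_pos (fun _ _ => Real.exp_pos _) Finset.univ_nonempty

/-- Upper bound: Gibbs variational inequality. -/
lemma upper_bound [Nonempty XA] [Nonempty XB] (θ : XA × XB → ℝ)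
    (τ : XA × XB → ℝ) (hτ : IsPMF τ) :
    (∑ x, τ x * θ x) + HAB τ ≤ Finset.univ.sup' Finset.univ_nonempty (Qfun θ) := by
  obtain ⟨hpos, hsum⟩ := hτ
  set M := Finset.univ.sup' Finset.univ_nonempty (Qfun θ) with hM
  have hQle : ∀ b : XB, Qfun θ b ≤ M := fun b => Finset.le_sup' _ (mem_univ b)
  set Z : XB → ℝ := fun b => ∑ a, Real.exp (θ (a, b)) with hZdef
  have hZ : ∀ b, 0 < Z b := fun b => Zpos θ b
  set τB : XB → ℝ := fun b => ∑ a, τ (a, b) with hτBdef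
  have hτB : ∀ b, 0 ≤ τB b := fun b => Finset.sum_nonneg fun a _ => hpos _
  have hle : ∀ a b, τ (a, b) ≤ τB b := fun a b =>
    Finset.single_le_sum (fun a _ => hpos (a, b)) (mem_univ a)
  -- pointwise key inequality
  have key : ∀ x : XA × XB, τ x * θ x - τ x * Real.log (τ x) + τ x * Real.log (τB x.2)
      ≤ Real.exp (θ x) * τB x.2 / Z x.2 - τ x + τ x * Qfun θ x.2 := by
    intro x
    rcases eq_or_lt_of_le (hpos x) with h0 | h0
    · rw [← h0]
      have : 0 ≤ Real.exp (θ x) * τB x.2 / Z x.2 :=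
        div_nonneg (mul_nonneg (Real.exp_pos _).le (hτB _)) (hZ _).le
      simp [this]
    · have htB : 0 < τB x.2 := lt_of_lt_of_le h0 (by simpa using hle x.1 x.2)
      set q := Real.exp (θ x) * τB x.2 / Z x.2 with hq
      have hqpos : 0 < q := div_pos (mul_pos (Real.exp_pos _) htB) (hZ _)
      have hlogq : Real.log q = θ x + Real.log (τB x.2) - Real.log (Z x.2) := by
        rw [hq, Real.log_div (mul_pos (Real.exp_pos _) htB).ne' (hZ _).ne',
          Real.log_mul (Real.exp_pos _).ne' htB.ne', Real.log_exp]
      have h1 : Real.log (q / τ x) ≤ q / τ x - 1 :=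
        Real.log_le_sub_one_of_pos (div_pos hqpos h0)
      have h2 : Real.log (q / τ x) = Real.log q - Real.log (τ x) :=
        Real.log_div hqpos.ne' h0.ne'
      have h3 : τ x * Real.log (q / τ x) ≤ q - τ x := by
        calc τ x * Real.log (q / τ x) ≤ τ x * (q / τ x - 1) :=
              mul_le_mul_of_nonneg_left h1 h0.le
          _ = q - τ x := by field_simp
      rw [h2, hlogq] at h3
      have hQ : Qfun θ x.2 = Real.log (Z x.2) := rfl
      rw [hQ]
      nlinarith [h3]
  -- sum the key inequality
  have hsumkey :
      (∑ x : XA × XB, (τ x * θ x - τ x * Real.log (τ x) + τ x * Real.log (τB x.2)))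
      ≤ ∑ x : XA × XB, (Real.exp (θ x) * τB x.2 / Z x.2 - τ x + τ x * Qfun θ x.2) :=
    Finset.sum_le_sum fun x _ => key x
  -- rewrite LHS
  have hL : (∑ x : XA × XB, (τ x * θ x - τ x * Real.log (τ x) + τ x * Real.log (τB x.2)))
      = (∑ x, τ x * θ x) + HAB τ := by
    rw [HAB]
    have h1 : ∑ x : XA × XB, τ x * Real.log (τB x.2) = ∑ b, τB b * Real.log (τB b) := by
      rw [Fintype.sum_prod_type_right]
      refine Finset.sum_congr rfl fun b _ => ?_
      show (∑ a, τ (a, b) * Real.log (τB b)) = _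
      rw [← Finset.sum_mul]
    simp only [Finset.sum_add_distrib, Finset.sum_sub_distrib, h1]
    ring
  -- rewrite RHS
  have hR : (∑ x : XA × XB, (Real.exp (θ x) * τB x.2 / Z x.2 - τ x + τ x * Qfun θ x.2))
      = ∑ b, τB b * Qfun θ b := by
    simp only [Finset.sum_add_distrib, Finset.sum_sub_distrib, hsum]
    have hsumB : ∑ b, τB b = 1 := by
      rw [Fintype.sum_prod_type_right] at hsum; exact hsum
    have h1 : ∑ x : XA × XB, Real.exp (θ x) * τB x.2 / Z x.2 = 1 := by
      rw [Fintype.sum_prod_type_right]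
      have heach : ∀ b : XB, (∑ a, Real.exp (θ (a, b)) * τB b / Z b) = τB b := by
        intro b
        rw [← Finset.sum_div, ← Finset.sum_mul]
        exact mul_div_cancel_left₀ _ (hZ b).ne'
      rw [Finset.sum_congr rfl fun b _ => heach b]
      exact hsumB
    have h2 : ∑ x : XA × XB, τ x * Qfun θ x.2 = ∑ b, τB b * Qfun θ b := by
      rw [Fintype.sum_prod_type_right]
      refine Finset.sum_congr rfl fun b _ => ?_
      show (∑ a, τ (a, b) * Qfun θ b) = _
      rw [← Finset.sum_mul]
    rw [h1, h2]
    ring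
  rw [hL] at hsumkey
  rw [hR] at hsumkey
  refine hsumkey.trans ?_
  have hsumB : ∑ b, τB b = 1 := by
    rw [Fintype.sum_prod_type_right] at hsum; exact hsum
  calc ∑ b, τB b * Qfun θ b ≤ ∑ b, τB b * M :=
        Finset.sum_le_sum fun b _ => mul_le_mul_of_nonneg_left (hQle b) (hτB b)
    _ = M := by rw [← Finset.sum_mul, hsumB, one_mul]

/-- The dual optimization remains exact when restricted to any set N with
M° ⊆ N ⊆ M: the maximum of E_τ[θ] + H_{A|B}(τ) over N equals max_{x_B} Q(x_B). -/
theorem restricted_duality [Nonempty XA] [Nonempty XB] (θ : XA × XB → ℝ)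
    (N : Set ((XA × XB) → ℝ)) (hMN : Mdet ⊆ N) (hNM : N ⊆ {τ | IsPMF τ}) :
    IsGreatest {v | ∃ τ ∈ N, v = (∑ x, τ x * θ x) + HAB τ}
      (Finset.univ.sup' Finset.univ_nonempty (Qfun θ)) := by
  obtain ⟨b0, -, hb0⟩ := Finset.exists_mem_eq_sup' (Finset.univ_nonempty (α := XB)) (Qfun θ)
  set Z : ℝ := ∑ a, Real.exp (θ (a, b0)) with hZdef
  have hZ : 0 < Z := Zpos θ b0
  set τ0 : XA × XB → ℝ := fun x => if x.2 = b0 then Real.exp (θ x) / Z else 0 with hτ0def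
  -- marginal of τ0
  have marg : ∀ b, (∑ a, τ0 (a, b)) = if b = b0 then 1 else 0 := by
    intro b
    by_cases h : b = b0
    · subst h
      simp only [hτ0def, if_pos rfl]
      rw [← Finset.sum_div, ← hZdef, div_self hZ.ne']
      simp
    · simp [hτ0def, h]
  have hnn : ∀ x, 0 ≤ τ0 x := by
    intro x
    simp only [hτ0def]
    split_ifs
    · positivity
    · exact le_rfl
  have hsum1 : ∑ x : XA × XB, τ0 x = 1 := by
    rw [Fintype.sum_prod_type_right]
    rw [Finset.sum_congr rfl fun b _ => marg b]
    simp
  have hMdet : τ0 ∈ Mdet := ⟨⟨hnn, hsum1⟩, b0, marg⟩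
  -- value of τ0
  have hlogτ0 : ∀ a : XA, Real.log (τ0 (a, b0)) = θ (a, b0) - Real.log Z := by
    intro a
    simp only [hτ0def, if_pos rfl]
    rw [Real.log_div (Real.exp_ne_zero _) hZ.ne', Real.log_exp]
  have hS : ∑ x : XA × XB, (τ0 x * θ x - τ0 x * Real.log (τ0 x)) = Qfun θ b0 := by
    rw [Fintype.sum_prod_type_right]
    have hb : ∀ b : XB, (∑ a, (τ0 (a, b) * θ (a, b) - τ0 (a, b) * Real.log (τ0 (a, b))))
        = if b = b0 then Qfun θ b0 else 0 := by
      intro b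
      by_cases h : b = b0
      · subst h
        rw [if_pos rfl]
        have heach : ∀ a : XA, τ0 (a, b) * θ (a, b) - τ0 (a, b) * Real.log (τ0 (a, b))
            = Real.exp (θ (a, b)) / Z * Real.log Z := by
          intro a
          rw [hlogτ0 a]
          simp only [hτ0def, if_pos rfl]
          ring
        rw [Finset.sum_congr rfl fun a _ => heach a, ← Finset.sum_mul, ← Finset.sum_div,
          ← hZdef, div_self hZ.ne', one_mul]
        rfl
      · simp [hτ0def, h]
    rw [Finset.sum_congr rfl fun b _ => hb b, Finset.sum_ite_eq' Finset.univ b0]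
    simp
  have hHB : ∑ b, (∑ a, τ0 (a, b)) * Real.log (∑ a, τ0 (a, b)) = 0 := by
    rw [Finset.sum_congr rfl fun b _ => by rw [marg b]]
    apply Finset.sum_eq_zero
    intro b _
    split_ifs <;> simp
  have hval : (∑ x, τ0 x * θ x) + HAB τ0 = Qfun θ b0 := by
    rw [HAB, hHB]
    rw [← hS, Finset.sum_sub_distrib]
    ring
  constructor
  · exact ⟨τ0, hMN hMdet, (hb0.trans hval.symm)⟩
  · rintro v ⟨τ, hτN, rfl⟩
    exact upper_bound θ τ (hNM hτN)
end
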